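/- Assume A ∩ A'^⊥ = A ∩ A', and let L ⊆ V be a subspace such that A^⊥ ∩ A'^⊥ = L ⊕ (A ∩ A') (internal direct sum). Then A^⊥ = L ⊕ A and A'^⊥ = L ⊕ A'; in particular the pair (A,A') is good. -/

import Mathlib

open Module Submodule

variable {k V : Type*} [Field k] [AddCommGroup V] [Module k V]

/-- The orthogonal `A^⊥ = {x ∈ V : ⟨x,a⟩ = 0 ∀ a ∈ A}` of a subspace `A` of `V` with
respect to a bilinear form `B` on `V`. -/
def perp (B : V →ₗ[k] V →ₗ[k] k) (A : Submodule k V) : Submodule k V where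
  carrier := {x | ∀ a ∈ A, B x a = 0}
  add_mem' := fun {x y} hx hy a ha => by
    simp [map_add, LinearMap.add_apply, hx a ha, hy a ha]
  zero_mem' := fun a ha => by simp
  smul_mem' := fun c x hx a ha => by
    simp [map_smul, LinearMap.smul_apply, hx a ha]

/-- The pair `(A,A')` of isotropic subspaces is *good* if there is a subspace `L` with
`A^⊥ = L ⊕ A` and `A'^⊥ = L ⊕ A'` (internal direct sums). -/
def IsGood (B : V →ₗ[k] V →ₗ[k] k) (A A' : Submodule k V) : Prop :=
  ∃ L : Submodule k V,
    (Disjoint L A ∧ L ⊔ A = perp B A) ∧ (Disjoint L A' ∧ L ⊔ A' = perp B A')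

lemma perp_eq_orthogonal (B : V →ₗ[k] V →ₗ[k] k) (hr : B.IsRefl) (A : Submodule k V) :
    perp B A = LinearMap.BilinForm.orthogonal B A := by
  ext x
  exact ⟨fun hx a ha => hr _ _ (hx a ha), fun hx a ha => hr _ _ (hx a ha)⟩

lemma orthogonal_sup (B : V →ₗ[k] V →ₗ[k] k) (A A' : Submodule k V) :
    LinearMap.BilinForm.orthogonal B (A ⊔ A') =
      LinearMap.BilinForm.orthogonal B A ⊓ LinearMap.BilinForm.orthogonal B A' := by
  refine le_antisymm (le_inf (LinearMap.BilinForm.orthogonal_le le_sup_left)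
    (LinearMap.BilinForm.orthogonal_le le_sup_right)) ?_
  rintro x ⟨hx1, hx2⟩ y hy
  obtain ⟨a, ha, a', ha', rfl⟩ := Submodule.mem_sup.mp hy
  have := hx1 a ha
  have := hx2 a' ha'
  show B (a + a') x = 0
  rw [map_add, LinearMap.add_apply, ‹B a x = 0›, ‹B a' x = 0›, add_zero]

theorem stmt8 [FiniteDimensional k V] (n t : ℕ) (hn : 1 ≤ n) (htn : t ≤ n)
    (B : V →ₗ[k] V →ₗ[k] k)
    (hdim : finrank k V = 2 * n)
    (halt : ∀ x : V, B x x = 0)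
    (hnd : ∀ x : V, (∀ y : V, B x y = 0) → x = 0)
    (A A' : Submodule k V)
    (hA : A ≤ perp B A) (hA' : A' ≤ perp B A')
    (hdA : finrank k A = t) (hdA' : finrank k A' = t)
    (hyp : A ⊓ perp B A' = A ⊓ A')
    (L : Submodule k V)
    (hL1 : Disjoint L (A ⊓ A')) (hL2 : L ⊔ (A ⊓ A') = perp B A ⊓ perp B A') :
    (Disjoint L A ∧ L ⊔ A = perp B A) ∧ (Disjoint L A' ∧ L ⊔ A' = perp B A') ∧
      IsGood B A A' := by
  have hr : B.IsRefl := by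
    intro x y hxy
    have h := halt (x + y)
    simp only [map_add, LinearMap.add_apply, halt x, halt y] at h
    have h2 : B y x + B x y = 0 := by
      rw [zero_add, add_zero] at h; exact h
    rw [hxy, add_zero] at h2
    exact h2
  have hN : LinearMap.BilinForm.Nondegenerate B := ⟨fun x hx => hnd x fun y => hx y, fun y hy => hnd y fun x => hr _ _ (hy x)⟩
  rw [perp_eq_orthogonal B hr] at hyp hA hA' hL2 ⊢
  rw [perp_eq_orthogonal B hr] at hL2 ⊢
  -- finrank of orthogonal
  have hfr : ∀ W : Submodule k V, finrank k W + finrank k ((LinearMap.BilinForm.orthogonal B W)) = 2 * n := by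
    intro W
    have h1 := LinearMap.BilinForm.finrank_add_finrank_orthogonal hr (B := B) W
    rw [LinearMap.BilinForm.orthogonal_top_eq_bot hN, inf_bot_eq, finrank_bot, add_zero, hdim] at h1
    exact h1
  have hoo : ∀ W : Submodule k V, LinearMap.BilinForm.orthogonal B (LinearMap.BilinForm.orthogonal B W) = W :=
    LinearMap.BilinForm.orthogonal_orthogonal hN hr
  -- Step A : A' ⊓ (LinearMap.BilinForm.orthogonal B A) = A ⊓ A'
  have hC1 : A ⊓ A' ≤ A' ⊓ (LinearMap.BilinForm.orthogonal B A) := le_inf inf_le_right (inf_le_left.trans hA)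
  have stepA : A' ⊓ (LinearMap.BilinForm.orthogonal B A) = A ⊓ A' := by
    refine ((eq_of_le_of_finrank_le hC1 ?_)).symm
    have sub : (LinearMap.BilinForm.orthogonal B A') ⊔ A ≤ (LinearMap.BilinForm.orthogonal B (A' ⊓ LinearMap.BilinForm.orthogonal B A)) := by
      refine sup_le (LinearMap.BilinForm.orthogonal_le inf_le_left) ?_
      have := LinearMap.BilinForm.orthogonal_le (B := B) (inf_le_right : A' ⊓ (LinearMap.BilinForm.orthogonal B A) ≤ (LinearMap.BilinForm.orthogonal B A))
      rw [hoo A] at this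
      exact this
    have e1 := hfr (A' ⊓ (LinearMap.BilinForm.orthogonal B A))
    have e2 : finrank k ((LinearMap.BilinForm.orthogonal B A') ⊔ A : Submodule k V) ≤ finrank k ((LinearMap.BilinForm.orthogonal B (A' ⊓ LinearMap.BilinForm.orthogonal B A))) :=
      Submodule.finrank_mono sub
    have e3 := Submodule.finrank_sup_add_finrank_inf_eq ((LinearMap.BilinForm.orthogonal B A')) A
    have e4 : finrank k ((LinearMap.BilinForm.orthogonal B A') ⊓ A : Submodule k V) = finrank k (A ⊓ A' : Submodule k V) := by
      rw [inf_comm, hyp]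
    have e5 := hfr A
    have e6 := hfr A'
    have e7 : finrank k (A ⊓ A' : Submodule k V) ≤ finrank k A := Submodule.finrank_mono inf_le_left
    omega
  -- L lies in both orthogonals
  have hLle : L ≤ (LinearMap.BilinForm.orthogonal B A) ⊓ (LinearMap.BilinForm.orthogonal B A') := le_sup_left.trans_eq hL2
  -- Disjointness
  have hdLA : Disjoint L A := by
    rw [disjoint_iff]
    rw [disjoint_iff] at hL1
    refine le_bot_iff.mp (le_trans ?_ hL1.le)
    refine le_inf inf_le_left ?_
    have : L ⊓ A ≤ A ⊓ (LinearMap.BilinForm.orthogonal B A') := le_inf inf_le_right ((inf_le_left.trans hLle).trans inf_le_right)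
    exact this.trans hyp.le
  have hdLA' : Disjoint L A' := by
    rw [disjoint_iff]
    rw [disjoint_iff] at hL1
    refine le_bot_iff.mp (le_trans ?_ hL1.le)
    refine le_inf inf_le_left ?_
    have : L ⊓ A' ≤ A' ⊓ (LinearMap.BilinForm.orthogonal B A) := le_inf inf_le_right ((inf_le_left.trans hLle).trans inf_le_left)
    exact this.trans stepA.le
  -- finrank bookkeeping
  have fL : finrank k L + finrank k (A ⊓ A' : Submodule k V)
      = finrank k ((LinearMap.BilinForm.orthogonal B A) ⊓ (LinearMap.BilinForm.orthogonal B A') : Submodule k V) := by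
    have := Submodule.finrank_sup_add_finrank_inf_eq L (A ⊓ A')
    rw [hL2, disjoint_iff.mp hL1, finrank_bot, add_zero] at this
    exact this.symm
  have hsupo : (LinearMap.BilinForm.orthogonal B A) ⊓ (LinearMap.BilinForm.orthogonal B A') = (LinearMap.BilinForm.orthogonal B (A ⊔ A')) := (orthogonal_sup B A A').symm
  have eS := hfr (A ⊔ A')
  have eT := Submodule.finrank_sup_add_finrank_inf_eq A A'
  have eA := hfr A
  have eA' := hfr A'
  have eC : finrank k (A ⊓ A' : Submodule k V) ≤ finrank k A := Submodule.finrank_mono inf_le_left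
  have fLA : finrank k (L ⊔ A : Submodule k V) = finrank k L + finrank k A := by
    have := Submodule.finrank_sup_add_finrank_inf_eq L A
    rw [disjoint_iff.mp hdLA, finrank_bot, add_zero] at this
    exact this
  have fLA' : finrank k (L ⊔ A' : Submodule k V) = finrank k L + finrank k A' := by
    have := Submodule.finrank_sup_add_finrank_inf_eq L A'
    rw [disjoint_iff.mp hdLA', finrank_bot, add_zero] at this
    exact this
  rw [hsupo] at fL
  have hsup1 : L ⊔ A = (LinearMap.BilinForm.orthogonal B A) := by
    refine eq_of_le_of_finrank_le (sup_le (hLle.trans inf_le_left) hA) ?_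
    omega
  have hsup2 : L ⊔ A' = (LinearMap.BilinForm.orthogonal B A') := by
    refine eq_of_le_of_finrank_le (sup_le (hLle.trans inf_le_right) hA') ?_
    omega
  refine ⟨⟨hdLA, hsup1⟩, ⟨hdLA', hsup2⟩, L, ⟨hdLA, ?_⟩, hdLA', ?_⟩ <;>
    rw [perp_eq_orthogonal B hr]
  · exact hsup1
  · exact hsup2
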